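/- Let G be a finite group and l : G → ℝ a length function with l(e)=0, l(g)=l(g⁻¹). If the map P_t : ℂ[G] → ℂ[G], P_t(λ(g)) = exp(-t·l(g))·λ(g), is completely positive for all t ≥ 0, then l is conditionally negative definite. -/

import Mathlib

open scoped BigOperators ComplexOrder

/-- The adjoint (involution) on the group algebra:
`(Σ α_g λ(g))† = Σ conj(α_g) λ(g⁻¹)`. -/
noncomputable def gstar {G : Type*} [Group G] (x : MonoidAlgebra ℂ G) : MonoidAlgebra ℂ G :=
  MonoidAlgebra.ofCoeff
    (Finsupp.equivMapDomain (Equiv.inv G) (Finsupp.mapRange (starRingEnd ℂ) (map_zero _) x.coeff))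

/-- The semigroup `P_t` acting on the group algebra by
`P_t (λ(g)) = exp (-t l(g)) λ(g)`, extended linearly. -/
noncomputable def Psemi {G : Type*} [Group G] (l : G → ℝ) (t : ℝ)
    (x : MonoidAlgebra ℂ G) : MonoidAlgebra ℂ G :=
  x.coeff.sum fun g a => MonoidAlgebra.single g ((Real.exp (-t * l g) : ℂ) * a)

lemma gstar_apply {G : Type*} [Group G] (x : MonoidAlgebra ℂ G) (a : G) :
    (gstar x).coeff a = (starRingEnd ℂ) (x.coeff a⁻¹) := by
  simp [gstar, Finsupp.equivMapDomain]

lemma gstar_single {G : Type*} [Group G] (g : G) (c : ℂ) :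
    gstar (MonoidAlgebra.single g c) = MonoidAlgebra.single g⁻¹ ((starRingEnd ℂ) c) := by
  classical
  ext a
  rw [gstar_apply, MonoidAlgebra.coeff_single, MonoidAlgebra.coeff_single, Finsupp.single_apply,
    Finsupp.single_apply]
  by_cases h : g⁻¹ = a
  · simp [← h]
  · rw [if_neg h, if_neg (by intro hh; exact h (by rw [hh, inv_inv])), map_zero]

lemma Psemi_single {G : Type*} [Group G] (l : G → ℝ) (t : ℝ) (g : G) (c : ℂ) :
    Psemi l t (MonoidAlgebra.single g c) = MonoidAlgebra.single g ((Real.exp (-t * l g) : ℂ) * c) := by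
  simp [Psemi, Finsupp.sum_single_index, MonoidAlgebra.coeff_single]

lemma mul_apply_one' {G : Type*} [Group G] [Fintype G] (f h : MonoidAlgebra ℂ G) :
    (f * h).coeff 1 = ∑ a : G, f.coeff a * h.coeff a⁻¹ := by
  classical
  rw [MonoidAlgebra.mul_apply, Finsupp.sum]
  rw [Finset.sum_subset (Finset.subset_univ f.coeff.support) (by
    intro a _ ha
    simp [Finsupp.notMem_support_iff.mp ha, Finsupp.sum])]
  refine Finset.sum_congr rfl fun a _ => ?_
  rw [Finsupp.sum]
  rw [Finset.sum_subset (Finset.subset_univ h.coeff.support) (by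
    intro b _ hb
    simp [Finsupp.notMem_support_iff.mp hb])]
  have : ∀ b : G, (a * b = 1) ↔ (b = a⁻¹) := fun b => by
    constructor
    · intro hh; exact eq_inv_of_mul_eq_one_right hh
    · intro hh; simp [hh]
  simp only [this]
  simp [Finset.sum_ite_eq']

lemma gstarmul_pos {G : Type*} [Group G] [Fintype G] (x : MonoidAlgebra ℂ G) :
    0 ≤ (gstar x * x).coeff 1 := by
  rw [mul_apply_one' (gstar x) x]
  refine Finset.sum_nonneg fun a _ => ?_
  rw [gstar_apply]
  rw [starRingEnd_apply]; exact star_mul_self_nonneg (x.coeff a⁻¹)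

theorem stmt13 {G : Type*} [Group G] [Fintype G]
    (l : G → ℝ) (hl0 : l 1 = 0) (hlinv : ∀ g : G, l g⁻¹ = l g)
    (hcp : ∀ t : ℝ, 0 ≤ t →
      ∀ (n : ℕ) (a b : Fin n → MonoidAlgebra ℂ G),
        ∃ (k : ℕ) (x : Fin k → MonoidAlgebra ℂ G),
          (∑ i, ∑ j, gstar (b i) * Psemi l t (gstar (a i) * a j) * b j) =
            ∑ r, gstar (x r) * x r) :
    ∀ (k : ℕ) (α : Fin k → ℂ) (g : Fin k → G), (∑ i, α i) = 0 →
      (∑ i, ∑ j, α i * (starRingEnd ℂ) (α j) * (l ((g i)⁻¹ * g j) : ℂ)) ≤ 0 := by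
  intro k α g hsum
  classical
  set L : Fin k → Fin k → ℝ := fun i j => l ((g i)⁻¹ * g j) with hL
  set c : Fin k → Fin k → ℂ := fun i j => α i * (starRingEnd ℂ) (α j) with hc
  -- Step A: positivity of F t for t ≥ 0
  have hpos : ∀ t : ℝ, 0 ≤ t →
      (0:ℂ) ≤ ∑ i, ∑ j, c i j * (Real.exp (-t * L i j) : ℂ) := by
    intro t ht
    set A : Fin k → MonoidAlgebra ℂ G := fun i => MonoidAlgebra.single (g i) (1:ℂ) with hA
    set B : Fin k → MonoidAlgebra ℂ G :=
      fun i => MonoidAlgebra.single (g i)⁻¹ ((starRingEnd ℂ) (α i)) with hB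
    obtain ⟨k', x, hx⟩ := hcp t ht k A B
    have hLHS : (∑ i, ∑ j, gstar (B i) * Psemi l t (gstar (A i) * A j) * B j) =
        ∑ i, ∑ j, (MonoidAlgebra.single (1:G) (c i j * (Real.exp (-t * L i j) : ℂ)) :
          MonoidAlgebra ℂ G) := by
      refine Finset.sum_congr rfl fun i _ => Finset.sum_congr rfl fun j _ => ?_
      rw [hA, hB]
      simp only
      rw [gstar_single, gstar_single, inv_inv]
      rw [map_one, MonoidAlgebra.single_mul_single, one_mul, Psemi_single,
        MonoidAlgebra.single_mul_single, MonoidAlgebra.single_mul_single]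
      have h1 : g i * ((g i)⁻¹ * g j) * (g j)⁻¹ = 1 := by group
      rw [h1]
      have h2 : (starRingEnd ℂ) ((starRingEnd ℂ) (α i)) = α i := Complex.conj_conj (α i)
      rw [h2]
      congr 1
      rw [hc, hL]
      ring
    rw [hLHS] at hx
    have hval := congrArg (fun v : MonoidAlgebra ℂ G => v.coeff 1) hx
    simp only [MonoidAlgebra.coeff_sum, Finset.sum_apply'] at hval
    have hl1 : (∑ i, ∑ j, c i j * (Real.exp (-t * L i j) : ℂ)) =
        (∑ r, gstar (x r) * x r).coeff 1 := by
      rw [MonoidAlgebra.coeff_sum, Finset.sum_apply', ← hval]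
      refine Finset.sum_congr rfl fun i _ => Finset.sum_congr rfl fun j _ => ?_
      rw [MonoidAlgebra.coeff_single, Finsupp.single_apply, if_pos rfl]
    rw [hl1, MonoidAlgebra.coeff_sum, Finset.sum_apply']
    exact Finset.sum_nonneg fun r _ => gstarmul_pos (x r)
  -- real-part function
  set f : ℝ → ℝ := fun t => ∑ i, ∑ j, (c i j).re * Real.exp (-t * L i j) with hf
  have hfre : ∀ t : ℝ, (∑ i, ∑ j, c i j * (Real.exp (-t * L i j) : ℂ)).re = f t := by
    intro t
    rw [Complex.re_sum]
    refine Finset.sum_congr rfl fun i _ => ?_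
    rw [Complex.re_sum]
    refine Finset.sum_congr rfl fun j _ => ?_
    simp only [Complex.mul_re, Complex.ofReal_re, Complex.ofReal_im, mul_zero, sub_zero]
  have hfpos : ∀ t : ℝ, 0 ≤ t → 0 ≤ f t := by
    intro t ht
    have := hpos t ht
    rw [Complex.le_def] at this
    have h := this.1
    rwa [Complex.zero_re, hfre t] at h
  have hf0 : f 0 = 0 := by
    have : (∑ i, ∑ j, c i j * (Real.exp (-0 * L i j) : ℂ)) = 0 := by
      simp only [neg_zero, zero_mul, Real.exp_zero, Complex.ofReal_one, mul_one]
      rw [← Finset.sum_mul_sum]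
      rw [hsum, zero_mul]
    have h := congrArg Complex.re this
    rw [hfre 0] at h
    simpa using h
  -- derivative at 0
  set D : ℝ := -∑ i, ∑ j, (c i j).re * L i j with hD
  have hderiv : HasDerivAt f D 0 := by
    have : HasDerivAt f (∑ i, ∑ j, (c i j).re * (Real.exp (-(0:ℝ) * L i j) * (-L i j))) 0 := by
      refine HasDerivAt.fun_sum fun i _ => ?_
      refine HasDerivAt.fun_sum fun j _ => ?_
      have h1 : HasDerivAt (fun t : ℝ => -t * L i j) (-L i j) 0 := by
        simpa using (hasDerivAt_id (0:ℝ)).neg.mul_const (L i j)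
      exact (h1.exp).const_mul _
    convert this using 1
    rw [hD, neg_eq_iff_eq_neg, ← Finset.sum_neg_distrib]
    refine Finset.sum_congr rfl fun i _ => ?_
    rw [← Finset.sum_neg_distrib]
    refine Finset.sum_congr rfl fun j _ => ?_
    simp
  -- derivative nonneg
  have hDpos : 0 ≤ D := by
    have hslope := hasDerivAt_iff_tendsto_slope.mp hderiv
    have h2 : Filter.Tendsto (slope f 0) (nhdsWithin 0 (Set.Ioi 0)) (nhds D) :=
      hslope.mono_left (nhdsWithin_mono _ (fun x hx => ne_of_gt hx))
    refine ge_of_tendsto h2 ?_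
    filter_upwards [self_mem_nhdsWithin] with t ht
    have ht' : (0:ℝ) < t := ht
    rw [slope_def_field]
    rw [hf0, sub_zero, sub_zero]
    exact div_nonneg (hfpos t ht'.le) ht'.le
  -- conclude: S.re ≤ 0
  set S : ℂ := ∑ i, ∑ j, α i * (starRingEnd ℂ) (α j) * (L i j : ℂ) with hS
  have hSre : S.re = ∑ i, ∑ j, (c i j).re * L i j := by
    rw [hS, Complex.re_sum]
    refine Finset.sum_congr rfl fun i _ => ?_
    rw [Complex.re_sum]
    refine Finset.sum_congr rfl fun j _ => ?_
    simp [hc, Complex.mul_re]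
  have hre : S.re ≤ 0 := by
    rw [hSre]
    have := hDpos
    rw [hD] at this
    linarith
  have him : S.im = 0 := by
    have hSim : S.im = ∑ i, ∑ j, (c i j).im * L i j := by
      rw [hS, Complex.im_sum]
      refine Finset.sum_congr rfl fun i _ => ?_
      rw [Complex.im_sum]
      refine Finset.sum_congr rfl fun j _ => ?_
      simp [hc, Complex.mul_im]
    have hswap : ∀ i j : Fin k, (c i j).im * L i j = -((c j i).im * L j i) := by
      intro i j
      have hLs : L j i = L i j := by
        rw [hL]
        simp only
        rw [← hlinv ((g i)⁻¹ * g j)]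
        congr 1
        simp [mul_inv_rev]
      have hcs : (c j i).im = -((c i j).im) := by
        have : c j i = (starRingEnd ℂ) (c i j) := by
          rw [hc]; simp only [map_mul, RingHomCompTriple.comp_apply]
          ring_nf
          simp [mul_comm]
        rw [this, Complex.conj_im]
      rw [hLs, hcs]; ring
    have h1 : S.im = -S.im := by
      rw [hSim]
      conv_lhs => rw [Finset.sum_comm]
      rw [← Finset.sum_neg_distrib]
      refine Finset.sum_congr rfl fun i _ => ?_
      rw [← Finset.sum_neg_distrib]
      exact Finset.sum_congr rfl fun j _ => hswap j i
    linarith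
  show S ≤ 0
  rw [Complex.le_def]
  exact ⟨by simpa using hre, by simp [him]⟩
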